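/- Let P_T be a probability distribution on a finite set Y with P_T(y) > 0 for all y, and let 0 ≤ β < 1. If a probability distribution P satisfies P(y) = P_T(y)·P(y)^β / Z for all y (where Z = Σ_{y'} P_T(y')·P(y')^β), then P(y) = P_T(y)^{1/(1-β)} / Σ_{y'} P_T(y')^{1/(1-β)} for all y. -/

import Mathlib

/-- Fixed-point (sharpening) theorem: if a positive probability distribution `P` on a
finite set satisfies `P(y) = P_T(y)·P(y)^β / Z` with `Z = Σ_{y'} P_T(y')·P(y')^β`, then
`P(y) = P_T(y)^{1/(1-β)} / Σ_{y'} P_T(y')^{1/(1-β)}`. -/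
theorem veto_fixed_point {Y : Type*} [Fintype Y] [Nonempty Y]
    (PT P : Y → ℝ) (hPT : ∀ y, 0 < PT y) (hPTsum : ∑ y, PT y = 1)
    (hP : ∀ y, 0 < P y) (hPsum : ∑ y, P y = 1)
    (β : ℝ) (hβ0 : 0 ≤ β) (hβ1 : β < 1)
    (hfix : ∀ y, P y = PT y * P y ^ β / ∑ y', PT y' * P y' ^ β) :
    ∀ y, P y = PT y ^ (1 / (1 - β)) / ∑ y', PT y' ^ (1 / (1 - β)) := by
  set Z : ℝ := ∑ y', PT y' * P y' ^ β with hZ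
  have h1β : (0:ℝ) < 1 - β := by linarith
  have hZpos : 0 < Z := by
    apply Finset.sum_pos
    · intro y _; exact mul_pos (hPT y) (Real.rpow_pos_of_pos (hP y) β)
    · exact Finset.univ_nonempty
  set α : ℝ := 1 / (1 - β) with hα
  have hmul : (1 - β) * α = 1 := by
    rw [hα, mul_one_div_cancel h1β.ne']
  -- key: P y = PT y ^ α / Z ^ α
  have key : ∀ y, P y = PT y ^ α / Z ^ α := by
    intro y
    have h1 : P y ^ (1 - β) = PT y / Z := by
      have := hfix y
      have h2 : P y ^ (1 - β) = P y / P y ^ β := by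
        rw [Real.rpow_sub (hP y), Real.rpow_one]
      have h0 : P y * Z = PT y * P y ^ β := by
        rw [eq_div_iff hZpos.ne'] at this; exact this
      rw [h2, div_eq_div_iff (Real.rpow_pos_of_pos (hP y) β).ne' hZpos.ne']
      linarith
    have h3 : (P y ^ (1 - β)) ^ α = P y := by
      rw [← Real.rpow_mul (hP y).le, hmul, Real.rpow_one]
    calc P y = (P y ^ (1 - β)) ^ α := h3.symm
      _ = (PT y / Z) ^ α := by rw [h1]
      _ = PT y ^ α / Z ^ α := Real.div_rpow (hPT y).le hZpos.le α
  have hsum : ∑ y', PT y' ^ α = Z ^ α := by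
    have := hPsum
    rw [Finset.sum_congr rfl (fun y _ => key y)] at this
    rw [← Finset.sum_div] at this
    have hZα : (0:ℝ) < Z ^ α := Real.rpow_pos_of_pos hZpos α
    field_simp at this
    linarith
  intro y
  rw [key y, hsum]
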